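/- Let H be an infinite-dimensional Hilbert space with orthonormal basis (e_j)_{j∈J}, and let P ∈ B(H ⊗ H) be the orthogonal projection onto the closed span of {e_j ⊗ e_j : j ∈ J}. Then P commutes with the flip operator on H ⊗ H but P is not contained in the spatial tensor product B(H) ⊗̄ B(H) (the C*-tensor product with minimal norm, realized on H ⊗ H). -/

import Mathlib

open scoped InnerProductSpace ComplexConjugate

section Aux

variable {H K : Type*} [NormedAddCommGroup H] [InnerProductSpace ℂ H]
  [NormedAddCommGroup K] [InnerProductSpace ℂ K]
  (tpv : H → H → K)
  (htpv_inner : ∀ u v u' v' : H,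
    (inner ℂ (tpv u v) (tpv u' v') : ℂ) = (inner ℂ u u' : ℂ) * (inner ℂ v v' : ℂ))

include htpv_inner

lemma tpv_add_left (u u' v : H) : tpv (u + u') v = tpv u v + tpv u' v := by
  rw [← sub_eq_zero, ← inner_self_eq_zero (𝕜 := ℂ)]
  simp only [inner_sub_left, inner_sub_right, inner_add_left, inner_add_right, htpv_inner]
  ring

lemma tpv_smul_left (c : ℂ) (u v : H) : tpv (c • u) v = c • tpv u v := by
  rw [← sub_eq_zero, ← inner_self_eq_zero (𝕜 := ℂ)]
  simp only [inner_sub_left, inner_sub_right, inner_smul_left, inner_smul_right, htpv_inner]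
  ring

lemma norm_tpv (u v : H) : ‖tpv u v‖ = ‖u‖ * ‖v‖ := by
  have h := htpv_inner u v u v
  rw [inner_self_eq_norm_sq_to_K, inner_self_eq_norm_sq_to_K, inner_self_eq_norm_sq_to_K] at h
  have h' : ‖tpv u v‖ ^ 2 = (‖u‖ * ‖v‖) ^ 2 := by
    rw [mul_pow]; exact_mod_cast h
  rw [← Real.sqrt_sq (norm_nonneg (tpv u v)), h', Real.sqrt_sq (by positivity)]

omit htpv_inner in
lemma ext_of_dense {W : Type*} [NormedAddCommGroup W] [NormedSpace ℂ W]
    (htpv_dense : Dense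
      (↑(Submodule.span ℂ {x : K | ∃ u v : H, x = tpv u v}) : Set K))
    (f g : K →L[ℂ] W) (h : ∀ u v, f (tpv u v) = g (tpv u v)) : f = g := by
  ext x
  have hsub : (↑(Submodule.span ℂ {x : K | ∃ u v : H, x = tpv u v}) : Set K)
      ⊆ {x | f x = g x} := by
    intro z hz
    refine Submodule.span_induction (fun y hy => ?_) (by simp) (fun a b _ _ ha hb => ?_)
      (fun c a _ ha => ?_) hz
    · obtain ⟨u, v, rfl⟩ := hy; exact h u v
    · simp only [Set.mem_setOf_eq, map_add] at *; rw [ha, hb]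
    · simp only [Set.mem_setOf_eq, map_smul] at *; rw [ha]
  have hcl : closure (↑(Submodule.span ℂ {x : K | ∃ u v : H, x = tpv u v}) : Set K)
      ⊆ {x | f x = g x} :=
    closure_minimal hsub (isClosed_eq f.continuous g.continuous)
  exact hcl (by rw [htpv_dense.closure_eq]; trivial)

end Aux

/-- Let `H` be an infinite-dimensional Hilbert space with orthonormal basis
`(e_j)_{j ∈ J}` and `P` the orthogonal projection of `H ⊗ H` onto the closed span of
`{e_j ⊗ e_j}`.  Then `P` commutes with the flip, but `P` does not belong to the spatial
tensor product `B(H) ⊗̄ B(H)` (the norm closure of the span of elementary tensor operators).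
The Hilbert tensor product `H ⊗ H` is modelled by a Hilbert space `K` together with an
elementary-tensor map `tpv` on vectors and `tp` on operators. -/
theorem projection_not_in_spatial_tensor_product
    (H : Type*) [NormedAddCommGroup H] [InnerProductSpace ℂ H] [CompleteSpace H]
    (K : Type*) [NormedAddCommGroup K] [InnerProductSpace ℂ K] [CompleteSpace K]
    (J : Type*) [Infinite J] (e : HilbertBasis J ℂ H)
    (tpv : H → H → K)
    (htpv_inner : ∀ u v u' v' : H,
      (inner ℂ (tpv u v) (tpv u' v') : ℂ) = (inner ℂ u u' : ℂ) * (inner ℂ v v' : ℂ))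
    (htpv_dense : Dense
      (↑(Submodule.span ℂ {x : K | ∃ u v : H, x = tpv u v}) : Set K))
    (tp : (H →L[ℂ] H) → (H →L[ℂ] H) → (K →L[ℂ] K))
    (htp : ∀ (A B : H →L[ℂ] H) (u v : H), tp A B (tpv u v) = tpv (A u) (B v))
    (τ : K →L[ℂ] K) (hτ : ∀ u v : H, τ (tpv u v) = tpv v u)
    (P : K →L[ℂ] K)
    (hP_sa : IsSelfAdjoint P) (hP_idem : IsIdempotentElem P)
    (hP_range : ∀ x : K,
      P x ∈ closure (↑(Submodule.span ℂ (Set.range fun j : J => tpv (e j) (e j))) : Set K))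
    (hP_fix : ∀ x ∈ closure
      (↑(Submodule.span ℂ (Set.range fun j : J => tpv (e j) (e j))) : Set K), P x = x) :
    P * τ = τ * P ∧
    P ∉ closure
      (↑(Submodule.span ℂ {T : K →L[ℂ] K | ∃ A B : H →L[ℂ] H, T = tp A B}) :
        Set (K →L[ℂ] K)) := by
  classical
  have e_inner : ∀ i j : J, (inner ℂ (e i) (e j) : ℂ) = if i = j then 1 else 0 :=
    orthonormal_iff_ite.mp e.orthonormal
  have e_norm : ∀ j : J, ‖e j‖ = 1 := e.orthonormal.1
  set N : Submodule ℂ K := Submodule.span ℂ (Set.range fun j : J => tpv (e j) (e j)) with hN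
  -- τ is self-adjoint
  have τ_flip_inner : ∀ (u v : H) (w : K),
      (inner ℂ (tpv u v) (τ w) : ℂ) = (inner ℂ (tpv v u) w : ℂ) := by
    intro u v
    have hfg : (innerSL ℂ (tpv u v)).comp τ = innerSL ℂ (tpv v u) := by
      refine ext_of_dense tpv htpv_dense _ _ (fun a b => ?_)
      simp only [ContinuousLinearMap.comp_apply, innerSL_apply_apply, hτ, htpv_inner]
      ring
    intro w
    exact DFunLike.congr_fun hfg w
  have τ_adj : ContinuousLinearMap.adjoint τ = τ := by
    refine ext_of_dense tpv htpv_dense _ _ (fun u v => ?_)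
    rw [hτ]
    refine ext_inner_left ℂ (fun w => ?_)
    rw [ContinuousLinearMap.adjoint_inner_right]
    calc (inner ℂ (τ w) (tpv u v) : ℂ)
        = starRingEnd ℂ (inner ℂ (tpv u v) (τ w)) := (inner_conj_symm _ _).symm
      _ = starRingEnd ℂ (inner ℂ (tpv v u) w) := by rw [τ_flip_inner]
      _ = inner ℂ w (tpv v u) := inner_conj_symm _ _
  -- τ maps the diagonal subspace into itself
  have τN : ∀ m ∈ closure (↑N : Set K), τ m ∈ closure (↑N : Set K) := by
    have hτN : ∀ z ∈ (↑N : Set K), τ z ∈ (↑N : Set K) := by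
      intro z hz
      refine Submodule.span_induction (fun y hy => ?_) (by simp) (fun a b _ _ ha hb => ?_)
        (fun c a _ ha => ?_) hz
      · obtain ⟨j, rfl⟩ := hy
        rw [hτ]
        exact Submodule.subset_span ⟨j, rfl⟩
      · rw [map_add]; exact Submodule.add_mem _ ha hb
      · rw [map_smul]; exact Submodule.smul_mem _ _ ha
    intro m hm
    have h1 : τ m ∈ τ '' closure (↑N : Set K) := ⟨m, hm, rfl⟩
    have h2 := image_closure_subset_closure_image τ.continuous h1
    exact closure_mono (Set.image_subset_iff.mpr hτN) h2
  have hPTP : P * τ * P = τ * P := by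
    ext x
    simp only [ContinuousLinearMap.mul_apply]
    exact hP_fix _ (τN _ (hP_range x))
  have part1 : P * τ = τ * P := by
    have hstar := congrArg star hPTP
    simp only [star_mul, hP_sa.star_eq, ContinuousLinearMap.star_eq_adjoint, τ_adj,
      ← mul_assoc] at hstar
    exact hstar.symm.trans hPTP
  refine ⟨part1, ?_⟩
  -- P on vectors of the form v ⊗ e j
  have hP_elem : ∀ (v : H) (j : J),
      P (tpv v (e j)) = (inner ℂ (e j) v : ℂ) • tpv (e j) (e j) := by
    intro v j
    set x := tpv v (e j) with hx
    set y := (inner ℂ (e j) v : ℂ) • tpv (e j) (e j) with hy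
    have hyN : y ∈ N := Submodule.smul_mem _ _ (Submodule.subset_span ⟨j, rfl⟩)
    have horto1 : ∀ m ∈ closure (↑N : Set K), (inner ℂ (x - P x) m : ℂ) = 0 := by
      intro m hm
      have hsa : (inner ℂ (P x) m : ℂ) = inner ℂ x (P m) := by
        conv_lhs => rw [← hP_sa.star_eq, ContinuousLinearMap.star_eq_adjoint]
        rw [ContinuousLinearMap.adjoint_inner_left]
      rw [inner_sub_left, hsa, hP_fix m hm, sub_self]
    have horto2 : ∀ m ∈ closure (↑N : Set K), (inner ℂ (x - y) m : ℂ) = 0 := by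
      have hsub : (↑N : Set K) ⊆ {m | (inner ℂ (x - y) m : ℂ) = 0} := by
        intro z hz
        refine Submodule.span_induction (fun w hw => ?_) (by simp) (fun a b _ _ ha hb => ?_)
          (fun c a _ ha => ?_) hz
        · obtain ⟨k, rfl⟩ := hw
          simp only [Set.mem_setOf_eq, hx, hy, inner_sub_left, inner_smul_left, htpv_inner,
            e_inner]
          by_cases hkj : j = k
          · subst hkj; simp [inner_conj_symm]
          · simp [hkj]
        · simp only [Set.mem_setOf_eq, inner_add_right] at *; rw [ha, hb, add_zero]
        · simp only [Set.mem_setOf_eq, inner_smul_right] at *; rw [ha, mul_zero]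
      intro m hm
      exact closure_minimal hsub
        (isClosed_eq (continuous_const.inner continuous_id) continuous_const) hm
    have hdiffmem : P x - y ∈ closure (↑N : Set K) := by
      have h1 : P x ∈ N.topologicalClosure := by
        have := hP_range x
        rwa [← Submodule.topologicalClosure_coe] at this
      have h2 : y ∈ N.topologicalClosure := N.le_topologicalClosure hyN
      have h3 := Submodule.sub_mem _ h1 h2
      rw [← Submodule.topologicalClosure_coe]
      exact h3
    have hzero : (inner ℂ (P x - y) (P x - y) : ℂ) = 0 := by
      have key : (inner ℂ ((x - y) - (x - P x)) (P x - y) : ℂ) = 0 := by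
        rw [inner_sub_left, horto1 _ hdiffmem, horto2 _ hdiffmem, sub_zero]
      have heq : (x - y) - (x - P x) = P x - y := by abel
      rwa [heq] at key
    exact sub_eq_zero.mp (inner_self_eq_zero.mp hzero)
  -- the embeddings v ↦ v ⊗ e j and slice maps
  intro hmem
  let Rl : J → (H →ₗ[ℂ] K) := fun j =>
    { toFun := fun v => tpv v (e j)
      map_add' := fun u u' => tpv_add_left tpv htpv_inner u u' (e j)
      map_smul' := fun c u => tpv_smul_left tpv htpv_inner c u (e j) }
  let R : J → (H →L[ℂ] K) := fun j =>
    LinearMap.mkContinuous (Rl j) 1 (fun v => by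
      simp only [Rl, LinearMap.coe_mk, AddHom.coe_mk]
      rw [norm_tpv tpv htpv_inner, e_norm, mul_one, one_mul])
  have hR : ∀ (j : J) (v : H), R j v = tpv v (e j) := fun j v => rfl
  have hRnorm : ∀ j : J, ‖R j‖ ≤ 1 := fun j =>
    LinearMap.mkContinuous_norm_le _ zero_le_one _
  have hL : ∀ (j : J) (u w : H),
      ContinuousLinearMap.adjoint (R j) (tpv u w) = (inner ℂ (e j) w : ℂ) • u := by
    intro j u w
    refine ext_inner_left ℂ (fun z => ?_)
    rw [ContinuousLinearMap.adjoint_inner_right, hR, htpv_inner, inner_smul_right]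
    ring
  let slice : J → (K →L[ℂ] K) → (H →L[ℂ] H) := fun j T =>
    (ContinuousLinearMap.adjoint (R j)).comp (T.comp (R j))
  have hslice_apply : ∀ (j : J) (T : K →L[ℂ] K) (v : H),
      slice j T v = ContinuousLinearMap.adjoint (R j) (T (tpv v (e j))) := fun _ _ _ => rfl
  have hslice_norm : ∀ (j : J) (T : K →L[ℂ] K), ‖slice j T‖ ≤ ‖T‖ := by
    intro j T
    calc ‖slice j T‖ ≤ ‖ContinuousLinearMap.adjoint (R j)‖ * ‖T.comp (R j)‖ :=
          ContinuousLinearMap.opNorm_comp_le _ _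
      _ ≤ ‖ContinuousLinearMap.adjoint (R j)‖ * (‖T‖ * ‖R j‖) := by
          refine mul_le_mul_of_nonneg_left (ContinuousLinearMap.opNorm_comp_le _ _)
            (norm_nonneg _)
      _ ≤ 1 * (‖T‖ * 1) := by
          rw [LinearIsometryEquiv.norm_map]
          exact mul_le_mul (hRnorm j)
            (mul_le_mul_of_nonneg_left (hRnorm j) (norm_nonneg _))
            (by positivity) zero_le_one
      _ = ‖T‖ := by ring
  have hslice_sub : ∀ (j : J) (S T : K →L[ℂ] K),
      slice j (S - T) = slice j S - slice j T := by
    intro j S T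
    ext v
    simp [slice, ContinuousLinearMap.sub_apply, map_sub]
  have hslice_tp : ∀ (j : J) (A B : H →L[ℂ] H),
      slice j (tp A B) = (inner ℂ (e j) (B (e j)) : ℂ) • A := by
    intro j A B
    ext v
    rw [hslice_apply, htp, hL]
    rfl
  have hslice_P : ∀ (j : J) (v : H), slice j P v = (inner ℂ (e j) v : ℂ) • e j := by
    intro j v
    rw [hslice_apply, hP_elem, map_smul, hL, e_inner]
    simp
  -- separation of diagonal slices of P
  have hsep : ∀ i j : J, i ≠ j → (1 : ℝ) ≤ ‖slice i P - slice j P‖ := by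
    intro i j hij
    have happ : (slice i P - slice j P) (e i) = e i := by
      rw [ContinuousLinearMap.sub_apply, hslice_P, hslice_P, e_inner, e_inner]
      simp [hij, Ne.symm hij]
    have h0 := (slice i P - slice j P).le_opNorm (e i)
    rw [happ] at h0
    simpa [e_norm i] using h0
  -- pick T close to P
  rw [Metric.mem_closure_iff] at hmem
  obtain ⟨T, hT_mem, hT_dist⟩ := hmem (1/3) (by norm_num)
  rw [dist_eq_norm] at hT_dist
  obtain ⟨t, htS, hTt⟩ := Submodule.mem_span_finite_of_mem_span hT_mem
  have hchoice : ∀ x ∈ (t : Set (K →L[ℂ] K)), ∃ A B : H →L[ℂ] H, x = tp A B :=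
    fun x hx => htS hx
  choose! A B hAB using hchoice
  set V : Submodule ℂ (H →L[ℂ] H) := Submodule.span ℂ (A '' (t : Set (K →L[ℂ] K))) with hV
  haveI hV_fd : FiniteDimensional ℂ V :=
    FiniteDimensional.span_of_finite ℂ (t.finite_toSet.image A)
  have hgV : ∀ j : J, slice j T ∈ V := by
    intro j
    refine Submodule.span_induction (fun x hx => ?_) ?_ (fun a b _ _ ha hb => ?_)
      (fun c a _ ha => ?_) hTt
    · rw [hAB x hx, hslice_tp]
      exact Submodule.smul_mem _ _ (Submodule.subset_span ⟨x, hx, rfl⟩)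
    · have : slice j (0 : K →L[ℂ] K) = 0 := by ext v; simp [slice]
      rw [this]; exact Submodule.zero_mem _
    · have : slice j (a + b) = slice j a + slice j b := by
        ext v; simp [slice, ContinuousLinearMap.add_apply, map_add]
      rw [this]; exact Submodule.add_mem _ ha hb
    · have : slice j (c • a) = c • slice j a := by
        ext v; simp [slice, ContinuousLinearMap.smul_apply, map_smul]
      rw [this]; exact Submodule.smul_mem _ _ ha
  have hg_close : ∀ j : J, ‖slice j P - slice j T‖ < 1/3 := by
    intro j
    rw [← hslice_sub]
    exact lt_of_le_of_lt (hslice_norm j _) hT_dist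
  have hg_sep : ∀ i j : J, i ≠ j → (1:ℝ)/3 < dist (slice i T) (slice j T) := by
    intro i j hij
    have h4 := dist_triangle4 (slice i P) (slice i T) (slice j T) (slice j P)
    simp only [dist_eq_norm] at h4
    have h1 := hg_close i
    have h2 : ‖slice j T - slice j P‖ < 1/3 := by rw [norm_sub_rev]; exact hg_close j
    have h3 := hsep i j hij
    rw [dist_eq_norm]
    linarith
  have hg_bound : ∀ j : J, ‖slice j T‖ ≤ ‖T‖ := fun j => hslice_norm j T
  -- contradiction via total boundedness in the finite-dimensional subspace V
  haveI : ProperSpace V := FiniteDimensional.proper ℂ V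
  let g : J → V := fun j => ⟨slice j T, hgV j⟩
  have hgball : ∀ j : J, g j ∈ Metric.closedBall (0 : V) ‖T‖ := by
    intro j
    rw [Metric.mem_closedBall, dist_zero_right]
    exact hg_bound j
  have htb : TotallyBounded (Metric.closedBall (0 : V) ‖T‖) :=
    (isCompact_closedBall _ _).totallyBounded
  rw [Metric.totallyBounded_iff] at htb
  obtain ⟨c, hc_fin, hc_cov⟩ := htb (1/6) (by norm_num)
  have hmemball : ∀ j : J, ∃ y ∈ c, g j ∈ Metric.ball y (1/6) := by
    intro j
    have := hc_cov (hgball j)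
    simpa using this
  choose y hy hgy using hmemball
  haveI : Finite c := hc_fin
  obtain ⟨i, j, hij, hyij⟩ :=
    Finite.exists_ne_map_eq_of_infinite (fun j => (⟨y j, hy j⟩ : c))
  have hyij' : y i = y j := congrArg Subtype.val hyij
  have hclose : dist (g i) (g j) < 1/3 := by
    calc dist (g i) (g j) ≤ dist (g i) (y i) + dist (y i) (g j) := dist_triangle _ _ _
      _ < 1/6 + 1/6 := by
          refine add_lt_add (Metric.mem_ball.mp (hgy i)) ?_
          rw [dist_comm, hyij']
          exact Metric.mem_ball.mp (hgy j)
      _ = 1/3 := by norm_num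
  have hfar := hg_sep i j hij
  have : dist (g i) (g j) = dist (slice i T) (slice j T) := rfl
  rw [this] at hclose
  linarith
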